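/- Let A be a real symmetric positive definite n×n matrix, let τ > 0, and let u, N be vectors in ℝⁿ. Then exp(τ·A) - 1 is an invertible matrix, and the vector u' := exp(-τ·A) · u + A⁻¹ · (1 - exp(-τ·A)) · N satisfies the quasi-implicit backward-Euler identity (exp(τ·A) - 1)⁻¹ · A · (u' - u) + A · u' = N. -/

import Mathlib

open Matrix

attribute [local instance] Matrix.linftyOpNormedRing Matrix.linftyOpNormedAlgebra

private lemma quadform_exp {n : ℕ} (A : Matrix (Fin n) (Fin n) ℝ) (hA : A.PosDef)
    (hAsymm : A.IsSymm) (τ : ℝ) (hτ : 0 < τ) : (NormedSpace.exp (τ • A) - 1).PosDef := by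
  have hconv : Summable fun k : ℕ => ((k.factorial : ℝ)⁻¹) • (τ • A) ^ k :=
    NormedSpace.expSeries_summable' (𝕂 := ℝ) (τ • A)
  have hτA : (τ • A).IsHermitian := by
    simp only [Matrix.IsHermitian, Matrix.conjTranspose_smul, star_trivial]
    rw [hA.1.eq]
  refine Matrix.PosDef.of_dotProduct_mulVec_pos ?_ ?_
  · exact (hτA.exp).sub Matrix.isHermitian_one
  · intro x hx
    -- linear map M ↦ xᵀ M x
    let L : Matrix (Fin n) (Fin n) ℝ →ₗ[ℝ] ℝ :=
      { toFun := fun M => dotProduct x (M *ᵥ x)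
        map_add' := by intro M M'; simp [Matrix.add_mulVec, dotProduct_add]
        map_smul' := by intro c M; simp [Matrix.smul_mulVec, dotProduct_smul] }
    let Lc := LinearMap.toContinuousLinearMap L
    have hL : ∀ M, Lc M = dotProduct x (M *ᵥ x) := fun _ => rfl
    have hsum : Summable fun k : ℕ =>
        ((k.factorial : ℝ)⁻¹) * (dotProduct x (((τ • A) ^ k) *ᵥ x)) := by
      have := hconv.map Lc Lc.continuous
      simpa [hL, Function.comp_def, Matrix.smul_mulVec, dotProduct_smul] using this
    have hexp : dotProduct x ((NormedSpace.exp (τ • A)) *ᵥ x)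
        = ∑' k : ℕ, ((k.factorial : ℝ)⁻¹) * (dotProduct x (((τ • A) ^ k) *ᵥ x)) := by
      rw [NormedSpace.exp_eq_tsum ℝ]
      have := Lc.map_tsum hconv
      simpa [hL, Matrix.smul_mulVec, dotProduct_smul] using this
    set a : ℕ → ℝ := fun k => ((k.factorial : ℝ)⁻¹) * (dotProduct x (((τ • A) ^ k) *ᵥ x))
      with ha
    have hnn : ∀ k, 0 ≤ a k := by
      intro k
      have h1 := (hA.posSemidef.pow k).dotProduct_mulVec_nonneg x
      simp only [star_trivial] at h1
      have h2 : 0 ≤ τ ^ k := (pow_pos hτ k).le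
      simp only [ha, smul_pow, Matrix.smul_mulVec, dotProduct_smul, smul_eq_mul]
      positivity
    have h0 : a 0 = dotProduct x x := by simp [ha]
    have h1 : 0 < a 1 := by
      have := hA.dotProduct_mulVec_pos hx
      simp only [star_trivial] at this
      simp only [ha, pow_one, Nat.factorial_one, Nat.cast_one, inv_one, one_mul,
        Matrix.smul_mulVec, dotProduct_smul, smul_eq_mul]
      positivity
    have hrest : 0 ≤ ∑' k : ℕ, a (k + 2) := tsum_nonneg fun k => hnn _
    have hsplit : ∑' k, a k = a 0 + (a 1 + ∑' k, a (k + 2)) := by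
      rw [Summable.tsum_eq_zero_add hsum]
      congr 1
      have hs1 : Summable fun k => a (k + 1) := by
        simpa using (summable_nat_add_iff 1).2 hsum
      rw [Summable.tsum_eq_zero_add hs1]
    have : dotProduct x ((NormedSpace.exp (τ • A) - 1) *ᵥ x)
        = a 1 + ∑' k, a (k + 2) := by
      rw [Matrix.sub_mulVec, dotProduct_sub, hexp, hsplit, h0]
      simp
    simp only [star_trivial]
    rw [this]
    linarith

theorem stmt2 {n : ℕ} (A : Matrix (Fin n) (Fin n) ℝ) (hA : A.PosDef) (hAsymm : A.IsSymm)
    (τ : ℝ) (hτ : 0 < τ) (u N : Fin n → ℝ) :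
    IsUnit (NormedSpace.exp (τ • A) - 1) ∧
    ((NormedSpace.exp (τ • A) - 1)⁻¹ * A).mulVec
        ((NormedSpace.exp (-(τ • A))).mulVec u
          + (A⁻¹ * (1 - NormedSpace.exp (-(τ • A)))).mulVec N - u)
      + A.mulVec ((NormedSpace.exp (-(τ • A))).mulVec u
          + (A⁻¹ * (1 - NormedSpace.exp (-(τ • A)))).mulVec N)
      = N := by
  set F := NormedSpace.exp (τ • A) with hF
  set E := NormedSpace.exp (-(τ • A)) with hE
  set B := F - 1 with hB
  have hBpd : B.PosDef := quadform_exp A hA hAsymm τ hτ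
  have hBunit : IsUnit B := hBpd.isUnit
  refine ⟨hBunit, ?_⟩
  have hBdet : IsUnit B.det := (Matrix.isUnit_iff_isUnit_det B).1 hBunit
  have hAdet : IsUnit A.det := (Matrix.isUnit_iff_isUnit_det A).1 hA.isUnit
  have hBinv : B⁻¹ * B = 1 := Matrix.nonsing_inv_mul B hBdet
  have hBinv' : B * B⁻¹ = 1 := Matrix.mul_nonsing_inv B hBdet
  have hAinv : A * A⁻¹ = 1 := Matrix.mul_nonsing_inv A hAdet
  -- E * F = 1 and F * E = 1
  have hEF : E * F = 1 := by
    rw [hE, hF, ← Matrix.exp_add_of_commute (-(τ • A)) (τ • A) (Commute.neg_left rfl),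
      neg_add_cancel, NormedSpace.exp_zero]
  have hFE : F * E = 1 := by
    rw [hE, hF, ← Matrix.exp_add_of_commute (τ • A) (-(τ • A)) (Commute.neg_right rfl),
      add_neg_cancel, NormedSpace.exp_zero]
  -- commutation facts
  have hAF : A * F = F * A := by
    have : Commute (τ • A) A := (Commute.refl A).smul_left τ
    exact (this.exp_left).symm
  have hAE : A * E = E * A := by
    have : Commute (-(τ • A)) A := ((Commute.refl A).smul_left τ).neg_left
    exact (this.exp_left).symm
  have hEFcomm : E * F = F * E := by rw [hEF, hFE]
  have hEB : E * B = B * E := by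
    simp only [hB, Matrix.mul_sub, Matrix.sub_mul, hEFcomm, Matrix.mul_one, Matrix.one_mul]
  have comm_inv : ∀ X : Matrix (Fin n) (Fin n) ℝ, X * B = B * X → X * B⁻¹ = B⁻¹ * X := by
    intro X hX
    calc X * B⁻¹ = B⁻¹ * B * (X * B⁻¹) := by rw [hBinv, Matrix.one_mul]
    _ = B⁻¹ * (B * X) * B⁻¹ := by simp only [Matrix.mul_assoc]
    _ = B⁻¹ * (X * B) * B⁻¹ := by rw [← hX]
    _ = B⁻¹ * X * (B * B⁻¹) := by simp only [Matrix.mul_assoc]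
    _ = B⁻¹ * X := by rw [hBinv', Matrix.mul_one]
  have hEBinv : E * B⁻¹ = B⁻¹ * E := comm_inv E hEB
  have hAB : A * B = B * A := by
    simp only [hB, Matrix.mul_sub, Matrix.sub_mul, hAF, Matrix.mul_one, Matrix.one_mul]
  have hABinv : A * B⁻¹ = B⁻¹ * A := comm_inv A hAB
  -- 1 - E = E * B
  have hkey : 1 - E = E * B := by
    rw [hB, Matrix.mul_sub, hEF, Matrix.mul_one]
  -- coefficient of u: (B⁻¹ * A) * (E - 1) + A * E = 0
  have hu : (B⁻¹ * A) * (E - 1) + A * E = 0 := by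
    have h1 : E - 1 = -(E * B) := by rw [← hkey]; exact (neg_sub 1 E).symm
    rw [h1]
    have : (B⁻¹ * A) * (E * B) = A * E := by
      calc (B⁻¹ * A) * (E * B) = B⁻¹ * (A * E) * B := by simp only [Matrix.mul_assoc]
      _ = B⁻¹ * (E * A) * B := by rw [hAE]
      _ = (B⁻¹ * E) * (A * B) := by simp only [Matrix.mul_assoc]
      _ = (E * B⁻¹) * (B * A) := by rw [hEBinv, hAB]
      _ = E * (B⁻¹ * B) * A := by simp only [Matrix.mul_assoc]
      _ = E * A := by rw [hBinv, Matrix.mul_one]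
      _ = A * E := hAE.symm
    rw [Matrix.mul_neg, this]
    exact neg_add_cancel _
  -- coefficient of N: (B⁻¹ * A) * (A⁻¹ * (1 - E)) + A * (A⁻¹ * (1 - E)) = 1
  have hN : (B⁻¹ * A) * (A⁻¹ * (1 - E)) + A * (A⁻¹ * (1 - E)) = 1 := by
    have h2 : A * (A⁻¹ * (1 - E)) = 1 - E := by
      rw [← Matrix.mul_assoc, hAinv, Matrix.one_mul]
    have h3 : (B⁻¹ * A) * (A⁻¹ * (1 - E)) = E := by
      calc (B⁻¹ * A) * (A⁻¹ * (1 - E)) = B⁻¹ * (A * A⁻¹) * (1 - E) := by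
            simp only [Matrix.mul_assoc]
      _ = B⁻¹ * (1 - E) := by rw [hAinv, Matrix.mul_one]
      _ = B⁻¹ * (E * B) := by rw [hkey]
      _ = B⁻¹ * E * B := (Matrix.mul_assoc _ _ _).symm
      _ = E * B⁻¹ * B := by rw [← hEBinv]
      _ = E * (B⁻¹ * B) := Matrix.mul_assoc _ _ _
      _ = E := by rw [hBinv, Matrix.mul_one]
    rw [h2, h3]
    abel
  -- now the vector computation
  have expand : ((B⁻¹ * A).mulVec (E.mulVec u + (A⁻¹ * (1 - E)).mulVec N - u)
      + A.mulVec (E.mulVec u + (A⁻¹ * (1 - E)).mulVec N))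
      = ((B⁻¹ * A) * (E - 1) + A * E).mulVec u
        + ((B⁻¹ * A) * (A⁻¹ * (1 - E)) + A * (A⁻¹ * (1 - E))).mulVec N := by
    simp only [Matrix.mulVec_add, Matrix.mulVec_sub, Matrix.mulVec_mulVec,
      Matrix.add_mulVec, Matrix.sub_mulVec, Matrix.mul_sub, Matrix.mul_one,
      Matrix.one_mulVec]
    abel
  rw [expand, hu, hN]
  simp
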